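/- Let d be an odd positive integer, let γ = (γ_1,…,γ_d) and Γ = (Γ_1,…,Γ_d) be two left-handed Clifford families of size d acting on ℂ^n with n = 2^{(d−1)/2}, and let b_1,…,b_d be nonzero real numbers. Set M = Σ_{j=1}^d b_j · (γ_j ⊗ Γ_j), an n²×n² self-adjoint matrix, |b| = Σ_{j=1}^d |b_j| and sgn(b) = Π_{j=1}^d sgn(b_j). If either (sgn(b) = 1 and d ≡ 1 mod 4) or (sgn(b) = −1 and d ≡ 3 mod 4), then |b| is an eigenvalue of M whose eigenspace is one-dimensional, and −|b| is not an eigenvalue of M. In the remaining cases, −|b| is an eigenvalue of M whose eigenspace is one-dimensional, and |b| is not an eigenvalue of M. -/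

import Mathlib

open Matrix

namespace WeylAux
open Kronecker




variable {d : ℕ} {N : Type*} [Fintype N] [DecidableEq N]

lemma gsq {γ : Fin d → Matrix N N ℂ}
    (hac : ∀ i j, γ i * γ j + γ j * γ i = if i = j then (2:ℂ) • (1 : Matrix N N ℂ) else 0)
    (k : Fin d) : γ k * γ k = 1 := by
  have h := hac k k
  rw [if_pos rfl] at h
  have h2 : (2:ℂ) • (γ k * γ k) = (2:ℂ) • (1 : Matrix N N ℂ) := by
    rw [two_smul]; exact h
  exact smul_right_injective (Matrix N N ℂ) two_ne_zero h2

lemma ganti {γ : Fin d → Matrix N N ℂ}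
    (hac : ∀ i j, γ i * γ j + γ j * γ i = if i = j then (2:ℂ) • (1 : Matrix N N ℂ) else 0)
    {i j : Fin d} (h : i ≠ j) : γ i * γ j = -(γ j * γ i) := by
  have h2 := hac i j
  rw [if_neg h] at h2
  linear_combination (norm := abel) h2

lemma move {γ : Fin d → Matrix N N ℂ}
    (hac : ∀ i j, γ i * γ j + γ j * γ i = if i = j then (2:ℂ) • (1 : Matrix N N ℂ) else 0) :
    ∀ (l : List (Fin d)) (k : Fin d), k ∉ l →
      γ k * (l.map γ).prod = (-1:ℂ)^l.length • ((l.map γ).prod * γ k) := by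
  intro l
  induction l with
  | nil => intro k _; simp
  | cons a l ih =>
    intro k hk
    rw [List.mem_cons, not_or] at hk
    obtain ⟨hka, hkl⟩ := hk
    have h1 : γ k * γ a = -(γ a * γ k) := ganti hac hka
    calc γ k * ((a :: l).map γ).prod
        = (γ k * γ a) * (l.map γ).prod := by
          rw [List.map_cons, List.prod_cons, mul_assoc]
      _ = -(γ a * (γ k * (l.map γ).prod)) := by rw [h1]; noncomm_ring
      _ = -(γ a * ((-1:ℂ)^l.length • ((l.map γ).prod * γ k))) := by rw [ih k hkl]
      _ = (-1:ℂ)^(a :: l).length • (((a :: l).map γ).prod * γ k) := by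
          rw [List.map_cons, List.prod_cons, List.length_cons, pow_succ]
          rw [mul_smul_comm]
          rw [← neg_smul]
          ring_nf
          rw [mul_assoc]

lemma trace_prod_eq_zero {γ : Fin d → Matrix N N ℂ}
    (hac : ∀ i j, γ i * γ j + γ j * γ i = if i = j then (2:ℂ) • (1 : Matrix N N ℂ) else 0)
    (l : List (Fin d)) (hnd : l.Nodup) (hne : l ≠ []) (hlt : l.length < d) :
    ((l.map γ).prod).trace = 0 := by
  rcases Nat.even_or_odd l.length with heven | hodd
  · -- even case: peel the head
    cases l with
    | nil => exact absurd rfl hne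
    | cons a l2 =>
      have hnd2 := List.nodup_cons.mp hnd
      have hodd2 : Odd l2.length := by
        rcases heven with ⟨t, ht⟩
        simp only [List.length_cons] at ht
        exact ⟨t - 1, by omega⟩
      have hmv := move hac l2 a hnd2.1
      rw [Odd.neg_one_pow hodd2, neg_one_smul] at hmv
      have h1 : (((a :: l2).map γ).prod).trace = ((l2.map γ).prod * γ a).trace := by
        rw [List.map_cons, List.prod_cons, Matrix.trace_mul_comm]
      have h2 : (((a :: l2).map γ).prod).trace = -(((l2.map γ).prod * γ a).trace) := by
        rw [List.map_cons, List.prod_cons, hmv, Matrix.trace_neg]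
      rw [h1] at h2
      have h3 : (2:ℂ) * ((List.map γ l2).prod * γ a).trace = 0 := by linear_combination h2
      rw [h1]
      rcases mul_eq_zero.mp h3 with h | h
      · exact absurd h two_ne_zero
      · exact h
  · -- odd case: find k outside l
    obtain ⟨k, hk⟩ : ∃ k : Fin d, k ∉ l := by
      by_contra h
      push_neg at h
      have hsub : (Finset.univ : Finset (Fin d)) ⊆ l.toFinset :=
        fun x _ => List.mem_toFinset.mpr (h x)
      have hcard := Finset.card_le_card hsub
      rw [List.toFinset_card_of_nodup hnd, Finset.card_univ, Fintype.card_fin] at hcard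
      omega
    have hmv := move hac l k hk
    rw [Odd.neg_one_pow hodd, neg_one_smul] at hmv
    have hkk : γ k * γ k = 1 := gsq hac k
    have h1 : (γ k * ((l.map γ).prod * γ k)).trace = ((l.map γ).prod).trace := by
      rw [Matrix.trace_mul_comm, mul_assoc, hkk, mul_one]
    have h2 : γ k * ((l.map γ).prod * γ k) = -((l.map γ).prod) := by
      rw [← mul_assoc, hmv, neg_mul, mul_assoc, hkk, mul_one]
    rw [h2, Matrix.trace_neg] at h1
    have h3 : (2:ℂ) * ((l.map γ).prod).trace = 0 := by linear_combination -h1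
    rcases mul_eq_zero.mp h3 with h | h
    · exact absurd h two_ne_zero
    · exact h


/-- Expansion of a product of `2⁻¹ • (1 + A j)` as a sum over sublists. -/
lemma prod_expand (A : Fin d → Matrix N N ℂ) :
    ∀ l : List (Fin d),
      (l.map fun j => (2:ℂ)⁻¹ • (1 + A j)).prod =
        ((2:ℂ)⁻¹)^l.length • ((l.sublists'.map fun s => (s.map A).prod).sum) := by
  intro l
  induction l with
  | nil => simp
  | cons a l ih =>
    rw [List.map_cons, List.prod_cons, ih, List.sublists'_cons, List.map_append,
      List.sum_append, List.map_map]
    have h1 : (List.map ((fun s => (List.map A s).prod) ∘ List.cons a) l.sublists').sum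
        = A a * (List.map (fun s => (List.map A s).prod) l.sublists').sum := by
      rw [← List.sum_map_mul_left]
      simp only [Function.comp_def, List.map_cons, List.prod_cons]
    rw [h1]
    set S := (List.map (fun s => (List.map A s).prod) l.sublists').sum with hS
    rw [List.length_cons, pow_succ, smul_mul_assoc, add_mul, one_mul, mul_smul_comm]
    module

/-- A product of pairwise commuting idempotents is idempotent. -/
lemma prod_idem (Q : Fin d → Matrix N N ℂ) (hQ : ∀ j, Q j * Q j = Q j)
    (hcomm : ∀ i j, Q i * Q j = Q j * Q i) :
    ∀ l : List (Fin d), (l.map Q).prod * (l.map Q).prod = (l.map Q).prod := by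
  intro l
  induction l with
  | nil => simp
  | cons a l ih =>
    have hc : Commute (Q a) ((l.map Q).prod) := by
      apply Commute.list_prod_right
      intro x hx
      obtain ⟨j, _, rfl⟩ := List.mem_map.mp hx
      exact hcomm a j
    rw [List.map_cons, List.prod_cons]
    calc Q a * (l.map Q).prod * (Q a * (l.map Q).prod)
        = Q a * ((l.map Q).prod * Q a) * (l.map Q).prod := by noncomm_ring
      _ = Q a * (Q a * (l.map Q).prod) * (l.map Q).prod := by rw [← hc.eq]
      _ = (Q a * Q a) * ((l.map Q).prod * (l.map Q).prod) := by noncomm_ring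
      _ = Q a * (l.map Q).prod := by rw [hQ, ih]

/-- `A k` absorbs into the product of the `Q j = 2⁻¹ • (1 + A j)` if `k` occurs in the list. -/
lemma A_mul_prodQ (A : Fin d → Matrix N N ℂ) (hsq : ∀ j, A j * A j = 1)
    (hcomm : ∀ i j, A i * A j = A j * A i) :
    ∀ (l : List (Fin d)) (k : Fin d), k ∈ l →
      A k * (l.map fun j => (2:ℂ)⁻¹ • (1 + A j)).prod
        = (l.map fun j => (2:ℂ)⁻¹ • (1 + A j)).prod := by
  intro l
  induction l with
  | nil => intro k hk; simp at hk
  | cons a l ih =>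
    intro k hk
    rw [List.map_cons, List.prod_cons]
    rcases eq_or_ne k a with rfl | hka
    · rw [← mul_assoc, mul_smul_comm, mul_add, mul_one, hsq, add_comm]
    · have hkl : k ∈ l := (List.mem_cons.mp hk).resolve_left hka
      have hc : A k * ((2:ℂ)⁻¹ • (1 + A a)) = ((2:ℂ)⁻¹ • (1 + A a)) * A k := by
        rw [mul_smul_comm, smul_mul_assoc, mul_add, add_mul, mul_one, one_mul, hcomm k a]
      rw [← mul_assoc, hc, mul_assoc, ih k hkl]

/-- If `v` is fixed by all the `A j` in the list then it is fixed by the product of the `Q j`. -/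
lemma prodQ_fixed (A : Fin d → Matrix N N ℂ) :
    ∀ (l : List (Fin d)) (v : N → ℂ), (∀ j ∈ l, A j *ᵥ v = v) →
      (l.map fun j => (2:ℂ)⁻¹ • (1 + A j)).prod *ᵥ v = v := by
  intro l
  induction l with
  | nil => intro v _; simp
  | cons a l ih =>
    intro v hv
    rw [List.map_cons, List.prod_cons, ← Matrix.mulVec_mulVec,
      ih v (fun j hj => hv j (List.mem_cons_of_mem a hj))]
    rw [Matrix.smul_mulVec, Matrix.add_mulVec, Matrix.one_mulVec,
      hv a (List.mem_cons_self (a := a) (l := l))]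
    have h2 : v + v = (2:ℂ) • v := (two_smul ℂ v).symm
    rw [h2, smul_smul]
    norm_num


/-- Pulling scalar factors out of a list product. -/
lemma smul_factor (c : Fin d → ℂ) (B : Fin d → Matrix N N ℂ) :
    ∀ l : List (Fin d),
      (l.map fun j => c j • B j).prod = (l.map c).prod • (l.map B).prod := by
  intro l
  induction l with
  | nil => simp
  | cons a l ih =>
    rw [List.map_cons, List.prod_cons, ih, List.map_cons, List.prod_cons,
      List.map_cons, List.prod_cons, smul_mul_smul_comm]

/-- Kronecker factorization of a list product. -/
lemma kron_factor {m : ℕ} (γ Γm : Fin d → Matrix (Fin m) (Fin m) ℂ) :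
    ∀ l : List (Fin d),
      (l.map fun j => Matrix.kroneckerMap (· * ·) (γ j) (Γm j)).prod =
        Matrix.kroneckerMap (· * ·) (l.map γ).prod (l.map Γm).prod := by
  intro l
  induction l with
  | nil => simpa using (Matrix.one_kronecker_one (α := ℂ)).symm
  | cons a l ih =>
    simp only [List.map_cons, List.prod_cons, ih]
    exact (Matrix.mul_kronecker_mul _ _ _ _).symm

lemma sum_mulVec' {ι : Type*} (s : Finset ι) (f : ι → Matrix N N ℂ) (v : N → ℂ) :
    (∑ j ∈ s, f j) *ᵥ v = ∑ j ∈ s, f j *ᵥ v := by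
  induction s using Finset.cons_induction with
  | empty => simp [Matrix.zero_mulVec]
  | cons a s ha ih => rw [Finset.sum_cons, Finset.sum_cons, Matrix.add_mulVec, ih]

lemma dotProduct_sum' {ι : Type*} (s : Finset ι) (u : N → ℂ) (f : ι → N → ℂ) :
    u ⬝ᵥ (∑ j ∈ s, f j) = ∑ j ∈ s, u ⬝ᵥ f j := by
  simp only [dotProduct, Finset.sum_apply, Finset.mul_sum]
  exact Finset.sum_comm

/-- The extremality argument: an eigenvector of the extremal eigenvalue is a common fixed
vector of the involutions. -/
lemma extremal {A : Fin d → Matrix N N ℂ} (hsa : ∀ j, (A j)ᴴ = A j)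
    (hsq : ∀ j, A j * A j = 1) {c : Fin d → ℝ} (hc : ∀ j, 0 < c j)
    {v : N → ℂ} (hv : (∑ j, (c j : ℂ) • A j) *ᵥ v = ((∑ j, c j : ℝ) : ℂ) • v) :
    ∀ j, A j *ᵥ v = v := by
  open ComplexOrder in
  have key : ∀ j (u : N → ℂ), star (A j *ᵥ v) ⬝ᵥ u = star v ⬝ᵥ (A j *ᵥ u) := by
    intro j u
    rw [star_mulVec, hsa j, ← Matrix.dotProduct_mulVec]
  have hterm : ∀ j, star (A j *ᵥ v - v) ⬝ᵥ (A j *ᵥ v - v) =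
      2 * (star v ⬝ᵥ v) - 2 * (star v ⬝ᵥ (A j *ᵥ v)) := by
    intro j
    rw [star_sub, sub_dotProduct, dotProduct_sub, dotProduct_sub,
      key j (A j *ᵥ v), key j v, Matrix.mulVec_mulVec, hsq j, Matrix.one_mulVec]
    ring
  have hMv : ∑ j, (c j : ℂ) * (star v ⬝ᵥ (A j *ᵥ v)) = ((∑ j, c j : ℝ) : ℂ) * (star v ⬝ᵥ v) := by
    calc ∑ j, (c j : ℂ) * (star v ⬝ᵥ (A j *ᵥ v))
        = star v ⬝ᵥ (∑ j, (c j : ℂ) • A j) *ᵥ v := by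
          rw [sum_mulVec', dotProduct_sum']
          congr 1
          ext j
          rw [Matrix.smul_mulVec, dotProduct_smul, smul_eq_mul]
      _ = ((∑ j, c j : ℝ) : ℂ) * (star v ⬝ᵥ v) := by
          rw [hv, dotProduct_smul, smul_eq_mul]
  have hsum : ∑ j, (c j : ℂ) * (star (A j *ᵥ v - v) ⬝ᵥ (A j *ᵥ v - v)) = 0 := by
    have e : ∀ j ∈ Finset.univ, (c j : ℂ) * (star (A j *ᵥ v - v) ⬝ᵥ (A j *ᵥ v - v)) =
        2 * ((c j : ℂ) * (star v ⬝ᵥ v)) - 2 * ((c j : ℂ) * (star v ⬝ᵥ (A j *ᵥ v))) := by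
      intro j _
      rw [hterm j]; ring
    rw [Finset.sum_congr rfl e, Finset.sum_sub_distrib, ← Finset.mul_sum, ← Finset.mul_sum,
      hMv, ← Finset.sum_mul]
    push_cast
    ring
  open ComplexOrder in
  have hnn : ∀ j ∈ Finset.univ, (0:ℂ) ≤ (c j : ℂ) * (star (A j *ᵥ v - v) ⬝ᵥ (A j *ᵥ v - v)) := by
    intro j _
    exact mul_nonneg (by exact_mod_cast (hc j).le) (dotProduct_star_self_nonneg _)
  intro j
  have hj := (Finset.sum_eq_zero_iff_of_nonneg hnn).mp hsum j (Finset.mem_univ j)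
  rcases mul_eq_zero.mp hj with h | h
  · exact absurd h (by exact_mod_cast (hc j).ne')
  · have := dotProduct_star_self_eq_zero.mp h
    exact sub_eq_zero.mp this


lemma mulVecLin_comp (P : Matrix N N ℂ) (Q : Matrix N N ℂ) :
    (P * Q).mulVecLin = P.mulVecLin ∘ₗ Q.mulVecLin := by
  ext v : 1
  simp [Matrix.mulVecLin_apply, Matrix.mulVec_mulVec]

/-- Trace of an idempotent matrix equals the dimension of its range. -/
lemma trace_idem (P : Matrix N N ℂ) (hP : P * P = P) :
    Matrix.trace P = (Module.finrank ℂ ↥(LinearMap.range P.mulVecLin) : ℂ) := by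
  set f := P.mulVecLin with hf
  have hff : f ∘ₗ f = f := by rw [hf, ← mulVecLin_comp, hP]
  have hproj : LinearMap.IsProj (LinearMap.range f) f := by
    refine ⟨fun x => LinearMap.mem_range_self f x, ?_⟩
    rintro x ⟨y, rfl⟩
    exact LinearMap.congr_fun hff y
  have h1 := hproj.trace
  have h2 : LinearMap.trace ℂ (N → ℂ) f = Matrix.trace P := by
    rw [LinearMap.trace_eq_matrix_trace ℂ (Pi.basisFun ℂ N) f,
      LinearMap.toMatrix_eq_toMatrix', hf, ← Matrix.toLin'_apply',
      LinearMap.toMatrix'_toLin']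
  rw [← h2, h1]



set_option maxHeartbeats 1000000 in
theorem main
    (d : ℕ) (hd : Odd d) (n : ℕ) (hn : n = 2 ^ ((d - 1) / 2))
    (γ Γm : Fin d → Matrix (Fin n) (Fin n) ℂ)
    (hγsa : ∀ j, (γ j)ᴴ = γ j)
    (hγac : ∀ i j, γ i * γ j + γ j * γ i =
      if i = j then (2 : ℂ) • (1 : Matrix (Fin n) (Fin n) ℂ) else 0)
    (hγhand : (List.ofFn γ).prod = (Complex.I) ^ ((d - 1) / 2) • (1 : Matrix (Fin n) (Fin n) ℂ))
    (hΓsa : ∀ j, (Γm j)ᴴ = Γm j)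
    (hΓac : ∀ i j, Γm i * Γm j + Γm j * Γm i =
      if i = j then (2 : ℂ) • (1 : Matrix (Fin n) (Fin n) ℂ) else 0)
    (hΓhand : (List.ofFn Γm).prod = (Complex.I) ^ ((d - 1) / 2) • (1 : Matrix (Fin n) (Fin n) ℂ))
    (b : Fin d → ℝ) (hb : ∀ j, b j ≠ 0)
    (M : Matrix (Fin n × Fin n) (Fin n × Fin n) ℂ)
    (hM : M = ∑ j, (b j : ℂ) • Matrix.kroneckerMap (· * ·) (γ j) (Γm j))
    (absB : ℝ) (habsB : absB = ∑ j, |b j|)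
    (sgnB : ℝ) (hsgnB : sgnB = ∏ j, Real.sign (b j))
    (E : ℂ → Submodule ℂ (Fin n × Fin n → ℂ))
    (hE : ∀ c, E c = LinearMap.ker
      (Matrix.mulVecLin (M - c • (1 : Matrix (Fin n × Fin n) (Fin n × Fin n) ℂ))))
    (ε : ℝ) (hε : ε = 1 ∨ ε = -1) :
    (ε * (sgnB * (-1 : ℝ)^((d - 1) / 2)) = 1 →
      Module.finrank ℂ ↥(E ((ε * absB : ℝ) : ℂ)) = 1)
    ∧ (ε * (sgnB * (-1 : ℝ)^((d - 1) / 2)) = -1 →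
      E ((ε * absB : ℝ) : ℂ) = ⊥) := by
  set m := (d - 1) / 2 with hm'
  have hm : d = 2 * m + 1 := by obtain ⟨t, ht⟩ := hd; omega
  set σ : Fin d → ℝ := fun j => Real.sign (b j) with hσ'
  have hσ : ∀ j, σ j = 1 ∨ σ j = -1 := by
    intro j
    rcases (hb j).lt_or_gt with h | h
    · exact Or.inr (Real.sign_of_neg h)
    · exact Or.inl (Real.sign_of_pos h)
  have hσb : ∀ j, σ j * |b j| = b j := by
    intro j
    show Real.sign (b j) * |b j| = b j
    rcases (hb j).lt_or_gt with h | h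
    · rw [Real.sign_of_neg h, abs_of_neg h]; ring
    · rw [Real.sign_of_pos h, abs_of_pos h]; ring
  have habs_pos : ∀ j, 0 < |b j| := fun j => abs_pos.mpr (hb j)
  have hε2 : ε * ε = 1 := by rcases hε with rfl | rfl <;> norm_num
  have hεc2 : ((ε : ℝ) : ℂ) * ((ε : ℝ) : ℂ) = 1 := by
    rw [← Complex.ofReal_mul, hε2, Complex.ofReal_one]
  -- the commuting family of involutions
  set Bm : Fin d → Matrix (Fin n × Fin n) (Fin n × Fin n) ℂ :=
    fun j => (γ j) ⊗ₖ (Γm j) with hBm'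
  set A : Fin d → Matrix (Fin n × Fin n) (Fin n × Fin n) ℂ :=
    fun j => ((ε * σ j : ℝ) : ℂ) • Bm j with hA'
  have hγsq : ∀ k, γ k * γ k = 1 := gsq hγac
  have hΓsq : ∀ k, Γm k * Γm k = 1 := gsq hΓac
  have hBsa : ∀ j, (Bm j)ᴴ = Bm j := by
    intro j
    ext ⟨i1, i2⟩ ⟨k1, k2⟩
    have h1 : star (γ j k1 i1) = γ j i1 k1 := by
      rw [← Matrix.conjTranspose_apply, hγsa]
    have h2 : star (Γm j k2 i2) = Γm j i2 k2 := by
      rw [← Matrix.conjTranspose_apply, hΓsa]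
    rw [Matrix.conjTranspose_apply]
    show star (γ j k1 i1 * Γm j k2 i2) = γ j i1 k1 * Γm j i2 k2
    rw [star_mul', h1, h2]
  have hAsa : ∀ j, (A j)ᴴ = A j := by
    intro j
    rw [hA', Matrix.conjTranspose_smul, hBsa j, Complex.star_def, Complex.conj_ofReal]
  have hBsq : ∀ j, Bm j * Bm j = 1 := by
    intro j
    rw [hBm', ← Matrix.mul_kronecker_mul, hγsq j, hΓsq j, Matrix.one_kronecker_one]
  have hεσ2 : ∀ j, (ε * σ j) * (ε * σ j) = 1 := by
    intro j
    rcases hσ j with h | h <;> rw [h] <;> rcases hε with rfl | rfl <;> norm_num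
  have hAsq : ∀ j, A j * A j = 1 := by
    intro j
    rw [hA', smul_mul_smul_comm, hBsq j, ← Complex.ofReal_mul, hεσ2 j]
    simp
  have hBcomm : ∀ i j, i ≠ j → Bm i * Bm j = Bm j * Bm i := by
    intro i j hij
    rw [hBm', ← Matrix.mul_kronecker_mul, ← Matrix.mul_kronecker_mul,
      ganti hγac (Ne.symm hij), ganti hΓac (Ne.symm hij)]
    rw [← neg_one_smul ℂ (γ i * γ j), ← neg_one_smul ℂ (Γm i * Γm j),
      Matrix.smul_kronecker, Matrix.kronecker_smul, smul_smul]
    norm_num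
  have hAcomm : ∀ i j, A i * A j = A j * A i := by
    intro i j
    rcases eq_or_ne i j with rfl | hij
    · rfl
    · rw [hA', smul_mul_smul_comm, smul_mul_smul_comm, hBcomm i j hij, mul_comm]
  -- the projection
  set Q : Fin d → Matrix (Fin n × Fin n) (Fin n × Fin n) ℂ :=
    fun j => (2:ℂ)⁻¹ • (1 + A j) with hQ'
  set P := ((List.finRange d).map Q).prod with hP'
  have hQidem : ∀ j, Q j * Q j = Q j := by
    intro j
    have hexp : (1 + A j) * (1 + A j) = (2:ℂ) • (1 + A j) := by
      calc (1 + A j) * (1 + A j) = 1 + A j + A j + A j * A j := by noncomm_ring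
        _ = (2:ℂ) • (1 + A j) := by rw [hAsq j, two_smul]; abel
    rw [hQ', smul_mul_smul_comm, hexp, smul_smul]
    show ((2:ℂ)⁻¹ * 2⁻¹ * 2) • (1 + A j) = (2:ℂ)⁻¹ • (1 + A j)
    norm_num
  have hQcomm : ∀ i j, Q i * Q j = Q j * Q i := by
    intro i j
    have e1 : (1 + A i) * (1 + A j) = 1 + A i + A j + A i * A j := by noncomm_ring
    have e2 : (1 + A j) * (1 + A i) = 1 + A j + A i + A j * A i := by noncomm_ring
    rw [hQ', smul_mul_smul_comm, smul_mul_smul_comm, e1, e2, hAcomm i j]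
    rw [mul_comm]
    congr 1
    abel
  have hPidem : P * P = P := prod_idem Q hQidem hQcomm (List.finRange d)
  have hAP : ∀ k, A k * P = P := by
    intro k
    have := A_mul_prodQ A hAsq hAcomm (List.finRange d) k (List.mem_finRange k)
    rw [hP', hQ']
    exact this
  -- eigenvector characterization
  have hMA : ∑ j, ((|b j| : ℝ) : ℂ) • A j = ((ε : ℝ) : ℂ) • M := by
    rw [hM, Finset.smul_sum]
    apply Finset.sum_congr rfl
    intro j _
    rw [hA', smul_smul, smul_smul, ← Complex.ofReal_mul]
    have : |b j| * (ε * σ j) = ε * b j := by linear_combination ε * hσb j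
    rw [this, Complex.ofReal_mul]
  have hMval : M = ((ε : ℝ) : ℂ) • ∑ j, ((|b j| : ℝ) : ℂ) • A j := by
    rw [hMA, smul_smul, hεc2, one_smul]
  have hEmem : ∀ v, v ∈ E ((ε * absB : ℝ) : ℂ) ↔
      M *ᵥ v = ((ε * absB : ℝ) : ℂ) • v := by
    intro v
    rw [hE, LinearMap.mem_ker, Matrix.mulVecLin_apply, Matrix.sub_mulVec,
      Matrix.smul_mulVec, Matrix.one_mulVec, sub_eq_zero]
  have hEfix : ∀ v, v ∈ E ((ε * absB : ℝ) : ℂ) ↔ ∀ j, A j *ᵥ v = v := by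
    intro v
    rw [hEmem v]
    constructor
    · intro hv
      apply extremal hAsa hAsq habs_pos
      rw [hMA, Matrix.smul_mulVec, hv, smul_smul]
      congr 1
      rw [← Complex.ofReal_mul]
      have he : ε * (ε * absB) = absB := by rw [← mul_assoc, hε2, one_mul]
      rw [he, habsB]
    · intro hv
      have h1 : (∑ j, ((|b j| : ℝ) : ℂ) • A j) *ᵥ v = ((absB : ℝ) : ℂ) • v := by
        rw [sum_mulVec']
        have : ∀ j ∈ Finset.univ, (((|b j| : ℝ) : ℂ) • A j) *ᵥ v = ((|b j| : ℝ) : ℂ) • v := by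
          intro j _
          rw [Matrix.smul_mulVec, hv j]
        rw [Finset.sum_congr rfl this, ← Finset.sum_smul]
        congr 1
        rw [habsB]
        push_cast
        ring
      rw [hMval, Matrix.smul_mulVec, h1, smul_smul, ← Complex.ofReal_mul]
  have hEP : E ((ε * absB : ℝ) : ℂ) = LinearMap.range P.mulVecLin := by
    ext v
    rw [hEfix v]
    constructor
    · intro h
      exact ⟨v, prodQ_fixed A (List.finRange d) v (fun j _ => h j)⟩
    · rintro ⟨u, rfl⟩ j
      show A j *ᵥ (P *ᵥ u) = P *ᵥ u
      rw [Matrix.mulVec_mulVec, hAP j]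
  -- trace computation
  have htr : Matrix.trace P = (((1 + ε * (sgnB * (-1:ℝ)^m)) / 2 : ℝ) : ℂ) := by
    have hexpand := prod_expand A (List.finRange d)
    rw [hP', hQ', hexpand, Matrix.trace_smul, List.length_finRange, Matrix.trace_list_sum,
      List.map_map]
    set L := (List.finRange d).sublists' with hL'
    set F : List (Fin d) → ℂ := Matrix.trace ∘ fun s => (List.map A s).prod with hF'
    have hLnd : L.Nodup := List.nodup_sublists'.mpr (List.nodup_finRange d)
    rw [← List.sum_toFinset F hLnd]
    have hFs : ∀ s : List (Fin d), F s =
        (((s.map fun j => ε * σ j).prod : ℝ) : ℂ) *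
          (((s.map γ).prod).trace * ((s.map Γm).prod).trace) := by
      intro s
      have e1 : (s.map A).prod = ((s.map fun j => ((ε * σ j : ℝ) : ℂ)).prod) • (s.map Bm).prod := by
        rw [hA']
        exact smul_factor _ _ s
      have e2 : (s.map Bm).prod = ((s.map γ).prod) ⊗ₖ ((s.map Γm).prod) := by
        rw [hBm']
        exact kron_factor γ Γm s
      have e3 : (s.map fun j => ((ε * σ j : ℝ) : ℂ)).prod
          = (((s.map fun j => ε * σ j).prod : ℝ) : ℂ) := by
        have := map_list_prod (Complex.ofRealHom) (s.map fun j => ε * σ j)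
        rw [List.map_map] at this
        exact this.symm
      show ((s.map A).prod).trace = _
      rw [e1, e2, e3, Matrix.trace_smul, Matrix.trace_kronecker, smul_eq_mul]
    have h0mem : ([] : List (Fin d)) ∈ L.toFinset :=
      List.mem_toFinset.mpr (List.mem_sublists'.mpr (List.nil_sublist _))
    have hfullne : List.finRange d ≠ [] := by
      intro h
      have h2 := List.length_finRange (n := d)
      rw [h] at h2
      simp at h2
      omega
    have hfullmem : List.finRange d ∈ L.toFinset.erase [] := by
      refine Finset.mem_erase.mpr ⟨hfullne, ?_⟩
      exact List.mem_toFinset.mpr (List.mem_sublists'.mpr (List.Sublist.refl _))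
    rw [← Finset.add_sum_erase _ F h0mem, ← Finset.add_sum_erase _ F hfullmem]
    have hrest : ∑ s ∈ (L.toFinset.erase []).erase (List.finRange d), F s = 0 := by
      apply Finset.sum_eq_zero
      intro s hs
      have hs2 := Finset.mem_erase.mp hs
      have hs3 := Finset.mem_erase.mp hs2.2
      have hsub : List.Sublist s (List.finRange d) := List.mem_sublists'.mp (List.mem_toFinset.mp hs3.2)
      have hnd : s.Nodup := (List.nodup_finRange d).sublist hsub
      have hlen : s.length < d := by
        have hle := hsub.length_le
        rw [List.length_finRange] at hle
        rcases lt_or_eq_of_le hle with h | h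
        · exact h
        · exact absurd (hsub.eq_of_length (by rw [List.length_finRange]; exact h)) hs2.1
      rw [hFs s, trace_prod_eq_zero hγac s hnd hs3.1 hlen]
      ring
    rw [hrest, add_zero]
    have hncast : ((n : ℂ)) = 2^m := by rw [hn]; push_cast; ring
    have hF0 : F [] = (2:ℂ)^(d-1) := by
      show Matrix.trace ((List.map A []).prod) = _
      rw [List.map_nil, List.prod_nil, Matrix.trace_one, Fintype.card_prod, Fintype.card_fin]
      push_cast
      rw [hncast, ← pow_add]
      congr 1
      omega
    have hFfull : F (List.finRange d) = (((ε * sgnB) : ℝ) : ℂ) * (((-1:ℝ)^m : ℝ) : ℂ) * 2^(d-1) := by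
      rw [hFs]
      have hc1 : ((List.finRange d).map fun j => ε * σ j).prod = ε * sgnB := by
        rw [← List.ofFn_eq_map, List.prod_ofFn, Finset.prod_mul_distrib, Finset.prod_const,
          Finset.card_univ, Fintype.card_fin, hsgnB]
        congr 1
        rcases hε with rfl | rfl
        · exact one_pow d
        · exact Odd.neg_one_pow hd
      have hg : ((List.finRange d).map γ).prod = Complex.I^m • 1 := by
        rw [← List.ofFn_eq_map]; exact hγhand
      have hG : ((List.finRange d).map Γm).prod = Complex.I^m • 1 := by
        rw [← List.ofFn_eq_map]; exact hΓhand
      rw [hc1, hg, hG, Matrix.trace_smul, Matrix.trace_one, Fintype.card_fin, smul_eq_mul]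
      have hII : (Complex.I^m * (n:ℂ)) * (Complex.I^m * (n:ℂ)) = ((-1:ℂ))^m * 2^(d-1) := by
        have h1 : Complex.I^m * Complex.I^m = ((-1:ℂ))^m := by
          rw [← mul_pow, Complex.I_mul_I]
        have h2 : (n:ℂ) * (n:ℂ) = 2^(d-1) := by
          rw [hncast, ← pow_add]
          congr 1
          omega
        calc (Complex.I^m * (n:ℂ)) * (Complex.I^m * (n:ℂ))
            = (Complex.I^m * Complex.I^m) * ((n:ℂ) * (n:ℂ)) := by ring
          _ = ((-1:ℂ))^m * 2^(d-1) := by rw [h1, h2]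
      rw [hII]
      push_cast
      ring
    rw [hF0, hFfull]
    have hpow : (2:ℂ)⁻¹^d * (2:ℂ)^(d-1) = 2⁻¹ := by
      rw [inv_pow]
      have h2d : (2:ℂ)^d = 2^(d-1) * 2 := by rw [← pow_succ]; congr 1; omega
      rw [h2d, mul_inv]
      have hne : ((2:ℂ)^(d-1)) ≠ 0 := pow_ne_zero _ two_ne_zero
      field_simp
    push_cast
    rw [smul_eq_mul]
    linear_combination ((1:ℂ) + ε * (sgnB * (-1)^m)) * hpow
  -- conclusion
  have hrank := trace_idem P hPidem
  constructor
  · intro hcond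
    rw [hEP]
    have : Matrix.trace P = 1 := by rw [htr, hcond]; norm_num
    rw [this] at hrank
    exact_mod_cast hrank.symm
  · intro hcond
    rw [hEP]
    have : Matrix.trace P = 0 := by rw [htr, hcond]; norm_num
    rw [this] at hrank
    have h0 : Module.finrank ℂ ↥(LinearMap.range P.mulVecLin) = 0 := by exact_mod_cast hrank.symm
    exact Submodule.finrank_eq_zero.mp h0


end WeylAux

/-- the extremal eigenvalue `±|b|` of `M = Σ b_j (γ_j ⊗ Γ_j)` is simple, and which
sign occurs is determined by `sgn(b)` and `d mod 4`. -/
theorem weyl_extremal_eigenvalue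
    (d : ℕ) (hd : Odd d) (n : ℕ) (hn : n = 2 ^ ((d - 1) / 2))
    (γ Γm : Fin d → Matrix (Fin n) (Fin n) ℂ)
    (hγsa : ∀ j, (γ j)ᴴ = γ j)
    (hγac : ∀ i j, γ i * γ j + γ j * γ i =
      if i = j then (2 : ℂ) • (1 : Matrix (Fin n) (Fin n) ℂ) else 0)
    (hγhand : (List.ofFn γ).prod = (Complex.I) ^ ((d - 1) / 2) • (1 : Matrix (Fin n) (Fin n) ℂ))
    (hΓsa : ∀ j, (Γm j)ᴴ = Γm j)
    (hΓac : ∀ i j, Γm i * Γm j + Γm j * Γm i =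
      if i = j then (2 : ℂ) • (1 : Matrix (Fin n) (Fin n) ℂ) else 0)
    (hΓhand : (List.ofFn Γm).prod = (Complex.I) ^ ((d - 1) / 2) • (1 : Matrix (Fin n) (Fin n) ℂ))
    (b : Fin d → ℝ) (hb : ∀ j, b j ≠ 0)
    (M : Matrix (Fin n × Fin n) (Fin n × Fin n) ℂ)
    (hM : M = ∑ j, (b j : ℂ) • Matrix.kroneckerMap (· * ·) (γ j) (Γm j))
    (absB : ℝ) (habsB : absB = ∑ j, |b j|)
    (sgnB : ℝ) (hsgnB : sgnB = ∏ j, Real.sign (b j))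
    (E : ℂ → Submodule ℂ (Fin n × Fin n → ℂ))
    (hE : ∀ c, E c = LinearMap.ker
      (Matrix.mulVecLin (M - c • (1 : Matrix (Fin n × Fin n) (Fin n × Fin n) ℂ)))) :
    (((sgnB = 1 ∧ d % 4 = 1) ∨ (sgnB = -1 ∧ d % 4 = 3)) →
        (Module.finrank ℂ ↥(E (absB : ℂ)) = 1 ∧ E (-(absB : ℂ)) = ⊥))
    ∧ (¬ ((sgnB = 1 ∧ d % 4 = 1) ∨ (sgnB = -1 ∧ d % 4 = 3)) →
        (Module.finrank ℂ ↥(E (-(absB : ℂ))) = 1 ∧ E (absB : ℂ) = ⊥)) := by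
  have hm : d = 2 * ((d - 1) / 2) + 1 := by obtain ⟨t, ht⟩ := hd; omega
  set m := (d - 1) / 2 with hm'
  have hσ : ∀ j, Real.sign (b j) = 1 ∨ Real.sign (b j) = -1 := by
    intro j
    rcases (hb j).lt_or_gt with h | h
    · exact Or.inr (Real.sign_of_neg h)
    · exact Or.inl (Real.sign_of_pos h)
  have hsgn : sgnB = 1 ∨ sgnB = -1 := by
    rw [hsgnB]
    refine Finset.prod_induction _ (fun x => x = 1 ∨ x = -1) ?_ ?_ ?_
    · rintro a c (rfl | rfl) (rfl | rfl) <;> norm_num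
    · exact Or.inl rfl
    · intro j _; exact hσ j
  set χ := sgnB * (-1 : ℝ)^m with hχ'
  have hχ : χ = 1 ∨ χ = -1 := by
    rcases hsgn with h | h <;> rcases Nat.even_or_odd m with hp | hp <;>
      rw [hχ', h] <;> [rw [hp.neg_one_pow]; rw [hp.neg_one_pow]; rw [hp.neg_one_pow];
        rw [hp.neg_one_pow]] <;> norm_num
  have hcond : ((sgnB = 1 ∧ d % 4 = 1) ∨ (sgnB = -1 ∧ d % 4 = 3)) ↔ χ = 1 := by
    rcases Nat.even_or_odd m with hp | hp
    · have h4 : d % 4 = 1 := by obtain ⟨t, ht⟩ := hp; omega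
      have hpow : (-1 : ℝ)^m = 1 := hp.neg_one_pow
      rw [hχ', hpow, mul_one]
      constructor
      · rintro (⟨h1, _⟩ | ⟨_, h3⟩)
        · exact h1
        · omega
      · intro h; exact Or.inl ⟨h, h4⟩
    · have h4 : d % 4 = 3 := by obtain ⟨t, ht⟩ := hp; omega
      have hpow : (-1 : ℝ)^m = -1 := hp.neg_one_pow
      rw [hχ', hpow, mul_neg_one]
      constructor
      · rintro (⟨_, h3⟩ | ⟨h1, _⟩)
        · omega
        · rw [h1]; norm_num
      · intro h
        exact Or.inr ⟨by linarith, h4⟩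
  have key := fun (ε : ℝ) (hε : ε = 1 ∨ ε = -1) =>
    WeylAux.main d hd n hn γ Γm hγsa hγac hγhand hΓsa hΓac hΓhand b hb M hM
      absB habsB sgnB hsgnB E hE ε hε
  have c1 : ((1 * absB : ℝ) : ℂ) = (absB : ℂ) := by norm_num
  have c2 : (((-1) * absB : ℝ) : ℂ) = -(absB : ℂ) := by push_cast; ring
  constructor
  · intro h
    have hχ1 : χ = 1 := hcond.mp h
    have k1 := (key 1 (Or.inl rfl)).1 (by rw [one_mul, ← hχ', hχ1])
    have k2 := (key (-1) (Or.inr rfl)).2 (by rw [← hχ', hχ1]; norm_num)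
    rw [c1] at k1
    rw [c2] at k2
    exact ⟨k1, k2⟩
  · intro h
    have hχ1 : χ = -1 := by
      rcases hχ with h1 | h1
      · exact absurd (hcond.mpr h1) h
      · exact h1
    have k1 := (key (-1) (Or.inr rfl)).1 (by rw [← hχ', hχ1]; norm_num)
    have k2 := (key 1 (Or.inl rfl)).2 (by rw [one_mul, ← hχ', hχ1])
    rw [c2] at k1
    rw [c1] at k2
    exact ⟨k1, k2⟩
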